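/- arXiv:2307.09752 — 2 statements merged into one kernel-verified Lean document; each statement's English description precedes it below -/
import Mathlib

section
/- Let C be a neighbour-transitive code in K(n,k) with minimum distance δ ≥ 3, with 2 ≤ k and 2k + 2 ≤ n (so K(n,k) is not an odd graph), and suppose Aut(C) acts transitively on Ω. Then Aut(C) acts 2-homogeneously on Ω, i.e. transitively on the 2-element subsets of Ω. -/
open Finset

abbrev KVert (Ω : Type*) [DecidableEq Ω] (k : ℕ) := {s : Finset Ω // s.card = k}

def kneser (Ω : Type*) [DecidableEq Ω] (k : ℕ) : SimpleGraph (KVert Ω k) where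
  Adj a b := a ≠ b ∧ Disjoint a.1 b.1
  symm := ⟨fun a b h => ⟨h.1.symm, h.2.symm⟩⟩
  loopless := ⟨fun a h => h.1 rfl⟩

/-- The action of a permutation of `Ω` on the vertices of the Kneser graph. -/
def permV {Ω : Type*} [DecidableEq Ω] {k : ℕ} (g : Equiv.Perm Ω) (a : KVert Ω k) : KVert Ω k :=
  ⟨a.1.map g.toEmbedding, by simp [a.2]⟩

/-- The setwise stabiliser of a code `C` inside `Sym(Ω)`. -/
def autC {Ω : Type*} [DecidableEq Ω] {k : ℕ} (C : Set (KVert Ω k)) : Set (Equiv.Perm Ω) :=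
  {g | (permV g) '' C = C}

/-- `nbrs C i` is `Cᵢ`, the set of vertices at distance exactly `i` from the code `C`. -/
def nbrs {Ω : Type*} [Fintype Ω] [DecidableEq Ω] {k : ℕ} (C : Set (KVert Ω k)) (i : ℕ) :
    Set (KVert Ω k) :=
  {γ | (∃ α ∈ C, (kneser Ω k).dist α γ = i) ∧ ∀ β ∈ C, i ≤ (kneser Ω k).dist β γ}

/-- `G` acts transitively on the set of vertices `S`. -/
def transOn {Ω : Type*} [DecidableEq Ω] {k : ℕ} (G : Set (Equiv.Perm Ω))
    (S : Set (KVert Ω k)) : Prop :=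
  ∀ x ∈ S, ∀ y ∈ S, ∃ g ∈ G, permV g x = y

namespace Stmt13Aux

open SimpleGraph

variable {Ω : Type*} [Fintype Ω] [DecidableEq Ω] {n k : ℕ} {C : Set (KVert Ω k)}

lemma permV_one (a : KVert Ω k) : permV (1 : Equiv.Perm Ω) a = a := by
  apply Subtype.ext
  show a.1.map _ = a.1
  have : (1 : Equiv.Perm Ω).toEmbedding = Function.Embedding.refl Ω :=
    Function.Embedding.ext fun x => rfl
  rw [this, Finset.map_refl]

lemma permV_mul (g h : Equiv.Perm Ω) (a : KVert Ω k) :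
    permV (g * h) a = permV g (permV h a) := by
  apply Subtype.ext
  show a.1.map _ = (a.1.map _).map _
  rw [Finset.map_map]
  rfl

lemma permV_inv_permV (g : Equiv.Perm Ω) (a : KVert Ω k) :
    permV g⁻¹ (permV g a) = a := by
  rw [← permV_mul, inv_mul_cancel, permV_one]

lemma permV_permV_inv (g : Equiv.Perm Ω) (a : KVert Ω k) :
    permV g (permV g⁻¹ a) = a := by
  rw [← permV_mul, mul_inv_cancel, permV_one]

lemma permV_injective (g : Equiv.Perm Ω) : Function.Injective (permV (k := k) g) := by
  intro a b hab
  have := congrArg (permV g⁻¹) hab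
  rwa [permV_inv_permV, permV_inv_permV] at this

lemma one_mem_autC : (1 : Equiv.Perm Ω) ∈ autC C := by
  show permV 1 '' C = C
  have : permV (k := k) (Ω := Ω) (1 : Equiv.Perm Ω) = id := funext permV_one
  rw [this, Set.image_id]

lemma mul_mem_autC {g h : Equiv.Perm Ω} (hg : g ∈ autC C) (hh : h ∈ autC C) :
    g * h ∈ autC C := by
  show permV (g * h) '' C = C
  have : permV (k := k) (Ω := Ω) (g * h) = permV g ∘ permV h := funext (permV_mul g h)
  rw [this, Set.image_comp, hh, hg]

lemma inv_mem_autC {g : Equiv.Perm Ω} (hg : g ∈ autC C) : g⁻¹ ∈ autC C := by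
  show permV g⁻¹ '' C = C
  conv_lhs => rw [← hg]
  rw [← Set.image_comp]
  have : permV (k := k) (Ω := Ω) g⁻¹ ∘ permV g = id := funext (permV_inv_permV g)
  rw [this, Set.image_id]

lemma permV_mem_C {g : Equiv.Perm Ω} (hg : g ∈ autC C) {a : KVert Ω k} (ha : a ∈ C) :
    permV g a ∈ C := by
  have : permV g a ∈ permV g '' C := Set.mem_image_of_mem _ ha
  rwa [hg] at this

lemma adj_permV (g : Equiv.Perm Ω) {a b : KVert Ω k} :
    (kneser Ω k).Adj (permV g a) (permV g b) ↔ (kneser Ω k).Adj a b := by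
  constructor
  · rintro ⟨h1, h2⟩
    refine ⟨fun hc => h1 (by rw [hc]), ?_⟩
    rwa [show (permV g a).1 = a.1.map g.toEmbedding from rfl,
      show (permV g b).1 = b.1.map g.toEmbedding from rfl, Finset.disjoint_map] at h2
  · rintro ⟨h1, h2⟩
    refine ⟨fun hc => h1 (permV_injective g hc), ?_⟩
    rw [show (permV g a).1 = a.1.map g.toEmbedding from rfl,
      show (permV g b).1 = b.1.map g.toEmbedding from rfl, Finset.disjoint_map]
    exact h2

/-- `permV g` as a graph homomorphism. -/
def permHom (g : Equiv.Perm Ω) : kneser Ω k →g kneser Ω k :=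
  ⟨permV g, fun h => (adj_permV g).mpr h⟩

lemma dist_permV_le (g : Equiv.Perm Ω) (a b : KVert Ω k)
    (hr : (kneser Ω k).Reachable a b) :
    (kneser Ω k).dist (permV g a) (permV g b) ≤ (kneser Ω k).dist a b := by
  obtain ⟨p, hp⟩ := hr.exists_walk_length_eq_dist
  calc (kneser Ω k).dist (permV g a) (permV g b) ≤ (p.map (permHom g)).length :=
        SimpleGraph.dist_le _
    _ = p.length := p.length_map _
    _ = _ := hp

lemma dist_permV (g : Equiv.Perm Ω) (a b : KVert Ω k)
    (hconn : (kneser Ω k).Connected) :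
    (kneser Ω k).dist (permV g a) (permV g b) = (kneser Ω k).dist a b := by
  refine le_antisymm (dist_permV_le g a b (hconn a b)) ?_
  have := dist_permV_le g⁻¹ (permV g a) (permV g b) (hconn _ _)
  rwa [permV_inv_permV, permV_inv_permV] at this

lemma exists_disjoint_kset (hcard : Fintype.card Ω = n) (U : Finset Ω) (hU : U.card + k ≤ n) :
    ∃ D : Finset Ω, D.card = k ∧ Disjoint D U := by
  have h1 : k ≤ Uᶜ.card := by
    rw [Finset.card_compl, hcard]; omega
  obtain ⟨D, hDsub, hDcard⟩ := Finset.exists_subset_card_eq h1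
  refine ⟨D, hDcard, Finset.disjoint_left.mpr fun x hx hxU => ?_⟩
  exact (Finset.mem_compl.mp (hDsub hx)) hxU

lemma adj_of_disjoint (hk1 : 1 ≤ k) {a b : KVert Ω k} (h : Disjoint a.1 b.1) :
    (kneser Ω k).Adj a b := by
  refine ⟨fun hc => ?_, h⟩
  subst hc
  rw [disjoint_self] at h
  have := a.2
  rw [h] at this
  simp at this
  omega

lemma kneser_preconnected (hcard : Fintype.card Ω = n) (hk1 : 1 ≤ k) (hn : 2 * k + 2 ≤ n) :
    ∀ a b : KVert Ω k, (kneser Ω k).Reachable a b := by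
  have key : ∀ N (a b : KVert Ω k), (a.1 \ b.1).card = N → (kneser Ω k).Reachable a b := by
    intro N
    induction N using Nat.strong_induction_on with
    | _ N ih =>
      intro a b hN
      rcases Nat.eq_zero_or_pos N with h0 | hpos
      · have hsub : a.1 ⊆ b.1 := by
          rw [← Finset.sdiff_eq_empty_iff_subset]
          exact Finset.card_eq_zero.mp (h0 ▸ hN)
        have : a.1 = b.1 := Finset.eq_of_subset_of_card_le hsub (by rw [a.2, b.2])
        exact (Subtype.ext this) ▸ SimpleGraph.Reachable.refl a
      · have hxne : (a.1 \ b.1).Nonempty := Finset.card_pos.mp (hN ▸ hpos)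
        obtain ⟨x, hx⟩ := hxne
        have hyne : (b.1 \ a.1).Nonempty := by
          apply Finset.card_pos.mp
          rw [Finset.card_sdiff_comm (by rw [a.2, b.2])]
          omega
        obtain ⟨y, hy⟩ := hyne
        rw [Finset.mem_sdiff] at hx hy
        have hyax : y ∉ a.1.erase x := fun h => hy.2 (Finset.mem_of_mem_erase h)
        set A' : Finset Ω := insert y (a.1.erase x) with hA'def
        have hA'card : A'.card = k := by
          rw [Finset.card_insert_of_notMem hyax, Finset.card_erase_of_mem hx.1, a.2]
          omega
        set a' : KVert Ω k := ⟨A', hA'card⟩ with ha'def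
        have hsd : a'.1 \ b.1 = (a.1 \ b.1).erase x := by
          ext z
          simp only [ha'def, hA'def, Finset.mem_sdiff, Finset.mem_insert, Finset.mem_erase]
          constructor
          · rintro ⟨hz1 | hz2, hz3⟩
            · exact absurd (hz1 ▸ hy.1) hz3
            · exact ⟨hz2.1, hz2.2, hz3⟩
          · rintro ⟨hz1, hz2, hz3⟩
            exact ⟨Or.inr ⟨hz1, hz2⟩, hz3⟩
        have hcard' : (a'.1 \ b.1).card = N - 1 := by
          rw [hsd, Finset.card_erase_of_mem (Finset.mem_sdiff.mpr hx), hN]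
        have hUcard : (a.1 ∪ a'.1).card + k ≤ n := by
          have h1 : a.1 ∪ a'.1 ⊆ insert y a.1 := by
            intro z hz
            rcases Finset.mem_union.mp hz with h | h
            · exact Finset.mem_insert_of_mem h
            · rcases Finset.mem_insert.mp h with h' | h'
              · exact h' ▸ Finset.mem_insert_self y a.1
              · exact Finset.mem_insert_of_mem (Finset.mem_of_mem_erase h')
          have h2 : (a.1 ∪ a'.1).card ≤ k + 1 := by
            calc (a.1 ∪ a'.1).card ≤ (insert y a.1).card := Finset.card_le_card h1
              _ ≤ a.1.card + 1 := Finset.card_insert_le y a.1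
              _ = k + 1 := by rw [a.2]
          omega
        obtain ⟨D, hDcard, hDdisj⟩ := exists_disjoint_kset hcard (a.1 ∪ a'.1) hUcard
        set d : KVert Ω k := ⟨D, hDcard⟩ with hddef
        have had : (kneser Ω k).Adj a d :=
          adj_of_disjoint hk1 (hDdisj.mono_right Finset.subset_union_left).symm
        have had' : (kneser Ω k).Adj d a' :=
          adj_of_disjoint hk1 (hDdisj.mono_right Finset.subset_union_right)
        exact (had.reachable.trans had'.reachable).trans
          (ih (N - 1) (by omega) a' b hcard')
  intro a b
  exact key _ a b rfl
lemma kneser_connected (hcard : Fintype.card Ω = n) (hk1 : 1 ≤ k) (hn : 2 * k + 2 ≤ n) :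
    (kneser Ω k).Connected := by
  obtain ⟨D, _, hDc⟩ := Finset.exists_subset_card_eq (s := (Finset.univ : Finset Ω)) (n := k)
    (by rw [Finset.card_univ, hcard]; omega)
  haveI : Nonempty (KVert Ω k) := ⟨⟨D, hDc⟩⟩
  exact ⟨fun a b => kneser_preconnected hcard hk1 hn a b⟩

lemma mem_nbrs_one (hconn : (kneser Ω k).Connected)
    (hdelta : ∀ α ∈ C, ∀ β ∈ C, α ≠ β → 3 ≤ (kneser Ω k).dist α β)
    {α γ : KVert Ω k} (hα : α ∈ C) (hadj : (kneser Ω k).Adj α γ) : γ ∈ nbrs C 1 := by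
  have hd1 : (kneser Ω k).dist α γ = 1 := SimpleGraph.dist_eq_one_iff_adj.mpr hadj
  have hγC : γ ∉ C := by
    intro hγ
    have := hdelta α hα γ hγ hadj.ne
    omega
  refine ⟨⟨α, hα, hd1⟩, fun β hβ => ?_⟩
  have hne : β ≠ γ := fun h => hγC (h ▸ hβ)
  exact hconn.pos_dist_of_ne hne

lemma unique_near (hconn : (kneser Ω k).Connected)
    (hdelta : ∀ α ∈ C, ∀ β ∈ C, α ≠ β → 3 ≤ (kneser Ω k).dist α β)
    {α β γ : KVert Ω k} (hα : α ∈ C) (hβ : β ∈ C)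
    (h1 : (kneser Ω k).dist α γ = 1) (h2 : (kneser Ω k).dist β γ = 1) : α = β := by
  by_contra hne
  have h3 := hdelta α hα β hβ hne
  have h4 : (kneser Ω k).dist α β ≤ 2 := by
    calc (kneser Ω k).dist α β ≤ (kneser Ω k).dist α γ + (kneser Ω k).dist γ β :=
          hconn.dist_triangle
      _ = 2 := by rw [h1, SimpleGraph.dist_comm, h2]
  omega

/-- The stabiliser of a codeword `α` in `Aut(C)`. -/
def stab (C : Set (KVert Ω k)) (α : KVert Ω k) : Set (Equiv.Perm Ω) :=
  {g | g ∈ autC C ∧ permV g α = α}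

lemma one_mem_stab {α : KVert Ω k} : (1 : Equiv.Perm Ω) ∈ stab C α :=
  ⟨one_mem_autC, permV_one α⟩

lemma mul_mem_stab {α : KVert Ω k} {g h : Equiv.Perm Ω} (hg : g ∈ stab C α)
    (hh : h ∈ stab C α) : g * h ∈ stab C α :=
  ⟨mul_mem_autC hg.1 hh.1, by rw [permV_mul, hh.2, hg.2]⟩

lemma inv_mem_stab {α : KVert Ω k} {g : Equiv.Perm Ω} (hg : g ∈ stab C α) :
    g⁻¹ ∈ stab C α :=
  ⟨inv_mem_autC hg.1, by conv_lhs => rw [← hg.2, permV_inv_permV]⟩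

lemma stab_mem_iff {α : KVert Ω k} {g : Equiv.Perm Ω} (hfix : permV g α = α) {x : Ω} :
    g x ∈ α.1 ↔ x ∈ α.1 := by
  have hmap : α.1.map g.toEmbedding = α.1 := congrArg Subtype.val hfix
  constructor
  · intro h
    rw [← hmap] at h
    obtain ⟨y, hy, he⟩ := Finset.mem_map.mp h
    exact (g.injective he) ▸ hy
  · intro h
    rw [← hmap]
    exact Finset.mem_map_of_mem _ h

/-- The stabiliser of a codeword acts transitively on `k`-subsets of the complement. -/
lemma stab_ksets (hconn : (kneser Ω k).Connected)
    (h1 : transOn (autC C) (nbrs C 1))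
    (hdelta : ∀ α ∈ C, ∀ β ∈ C, α ≠ β → 3 ≤ (kneser Ω k).dist α β)
    (hk1 : 1 ≤ k) {α : KVert Ω k} (hα : α ∈ C) {A B : Finset Ω}
    (hA : A.card = k) (hB : B.card = k)
    (hdA : Disjoint A α.1) (hdB : Disjoint B α.1) :
    ∃ g ∈ stab C α, A.image g = B := by
  set γA : KVert Ω k := ⟨A, hA⟩ with hγA
  set γB : KVert Ω k := ⟨B, hB⟩ with hγB
  have hadjA : (kneser Ω k).Adj α γA := adj_of_disjoint hk1 hdA.symm
  have hadjB : (kneser Ω k).Adj α γB := adj_of_disjoint hk1 hdB.symm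
  obtain ⟨g, hg, hgAB⟩ := h1 γA (mem_nbrs_one hconn hdelta hα hadjA) γB
    (mem_nbrs_one hconn hdelta hα hadjB)
  have hd1 : (kneser Ω k).dist (permV g α) γB = 1 := by
    rw [← hgAB, dist_permV g α γA hconn]
    exact SimpleGraph.dist_eq_one_iff_adj.mpr hadjA
  have hfix : permV g α = α :=
    unique_near hconn hdelta (permV_mem_C hg hα) hα hd1
      (SimpleGraph.dist_eq_one_iff_adj.mpr hadjB)
  refine ⟨g, ⟨hg, hfix⟩, ?_⟩
  have hval : A.map g.toEmbedding = B := congrArg Subtype.val hgAB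
  rwa [Finset.map_eq_image] at hval
/-- The stabiliser of a codeword acts transitively on points of the complement. -/
lemma stab_points (hcard : Fintype.card Ω = n) (hn : 2 * k + 2 ≤ n)
    (hconn : (kneser Ω k).Connected) (h1 : transOn (autC C) (nbrs C 1))
    (hdelta : ∀ α ∈ C, ∀ β ∈ C, α ≠ β → 3 ≤ (kneser Ω k).dist α β)
    (hk1 : 1 ≤ k) {α : KVert Ω k} (hα : α ∈ C) {u v : Ω}
    (hu : u ∉ α.1) (hv : v ∉ α.1) :
    ∃ g ∈ stab C α, g u = v := by
  classical
  by_cases huv : u = v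
  · exact ⟨1, one_mem_stab, huv⟩
  set X : Finset Ω := α.1ᶜ with hX
  have hXcard : X.card = n - k := by rw [hX, Finset.card_compl, α.2, hcard]
  set O : Finset Ω := X.filter (fun y => ∃ g ∈ stab C α, g u = y) with hO
  have huO : u ∈ O := Finset.mem_filter.mpr ⟨Finset.mem_compl.mpr hu, 1, one_mem_stab, rfl⟩
  suffices hvO : v ∈ O by
    obtain ⟨-, g, hg, hgu⟩ := Finset.mem_filter.mp hvO
    exact ⟨g, hg, hgu⟩
  by_contra hvO
  have himg : ∀ g ∈ stab C α, O.image g = O := by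
    intro g hg
    apply Finset.eq_of_subset_of_card_le
    · intro z hz
      obtain ⟨y, hy, rfl⟩ := Finset.mem_image.mp hz
      obtain ⟨hyX, g0, hg0, hg0u⟩ := Finset.mem_filter.mp hy
      refine Finset.mem_filter.mpr ⟨?_, g * g0, mul_mem_stab hg hg0, ?_⟩
      · exact Finset.mem_compl.mpr fun hc =>
          Finset.mem_compl.mp hyX ((stab_mem_iff hg.2).mp hc)
      · rw [Equiv.Perm.mul_apply, hg0u]
    · rw [Finset.card_image_of_injective _ g.injective]
  have hScard : k - 1 ≤ (X \ {u, v}).card := by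
    have h2 : X.card ≤ (X \ {u, v}).card + ({u, v} : Finset Ω).card := by
      have := Finset.card_sdiff_add_card X {u, v}
      have h3 : X.card ≤ (X ∪ {u, v}).card := Finset.card_le_card Finset.subset_union_left
      omega
    have h4 : ({u, v} : Finset Ω).card ≤ 2 := Finset.card_le_two
    omega
  obtain ⟨S, hSsub, hScard⟩ := Finset.exists_subset_card_eq hScard
  have hSX : S ⊆ X := hSsub.trans Finset.sdiff_subset
  have huS : u ∉ S := fun h => by
    have := Finset.mem_sdiff.mp (hSsub h)
    simp at this
  have hvS : v ∉ S := fun h => by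
    have := Finset.mem_sdiff.mp (hSsub h)
    simp at this
  have hdisjX : ∀ T : Finset Ω, T ⊆ X → Disjoint T α.1 := fun T hT =>
    Finset.disjoint_left.mpr fun x hx => Finset.mem_compl.mp (hT hx)
  have hAsub : insert u S ⊆ X := Finset.insert_subset (Finset.mem_compl.mpr hu) hSX
  have hBsub : insert v S ⊆ X := Finset.insert_subset (Finset.mem_compl.mpr hv) hSX
  have hAcard : (insert u S).card = k := by
    rw [Finset.card_insert_of_notMem huS, hScard]; omega
  have hBcard : (insert v S).card = k := by
    rw [Finset.card_insert_of_notMem hvS, hScard]; omega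
  obtain ⟨g, hg, hgAB⟩ := stab_ksets hconn h1 hdelta hk1 hα hAcard hBcard
    (hdisjX _ hAsub) (hdisjX _ hBsub)
  have key : ((insert u S) ∩ O).image g = (insert v S) ∩ O := by
    rw [Finset.image_inter _ _ g.injective, hgAB, himg g hg]
  have hcards : ((insert u S) ∩ O).card = ((insert v S) ∩ O).card := by
    rw [← key, Finset.card_image_of_injective _ g.injective]
  rw [Finset.insert_inter_of_mem huO, Finset.insert_inter_of_notMem hvO,
    Finset.card_insert_of_notMem (fun h => huS (Finset.mem_inter.mp h).1)] at hcards
  omega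

/-- Two subsets of the complement of `α` are related if some element of the stabiliser
of `α` maps one to the other. -/
def relp (C : Set (KVert Ω k)) (α : KVert Ω k) (p q : Finset Ω) : Prop :=
  ∃ g ∈ stab C α, p.image g = q

lemma relp_refl {α : KVert Ω k} (p : Finset Ω) : relp C α p p :=
  ⟨1, one_mem_stab, by simp⟩

lemma relp_symm {α : KVert Ω k} {p q : Finset Ω} (h : relp C α p q) : relp C α q p := by
  obtain ⟨g, hg, rfl⟩ := h
  refine ⟨g⁻¹, inv_mem_stab hg, ?_⟩
  rw [Finset.image_image]
  have : (⇑g⁻¹ ∘ ⇑g) = id := funext fun x => g.symm_apply_apply x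
  rw [this, Finset.image_id]

lemma relp_trans {α : KVert Ω k} {p q r : Finset Ω} (h1 : relp C α p q)
    (h2 : relp C α q r) : relp C α p r := by
  obtain ⟨g, hg, rfl⟩ := h1
  obtain ⟨g', hg', rfl⟩ := h2
  refine ⟨g' * g, mul_mem_stab hg' hg, ?_⟩
  rw [Finset.image_image]
  rfl

open Classical in
/-- The number of 2-subsets of `A` related to `p`. -/
noncomputable def pcnt (C : Set (KVert Ω k)) (α : KVert Ω k) (p A : Finset Ω) : ℕ :=
  ((A.powersetCard 2).filter (fun q => relp C α p q)).card

open Classical in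
/-- The number of `z ∈ S` with `{x, z}` related to `p`. -/
noncomputable def cnt2 (C : Set (KVert Ω k)) (α : KVert Ω k) (p : Finset Ω) (x : Ω)
    (S : Finset Ω) : ℕ :=
  (S.filter (fun z => relp C α p {x, z})).card

open Classical in
/-- Indicator of `{x, z}` being related to `p`. -/
noncomputable def aval (C : Set (KVert Ω k)) (α : KVert Ω k) (p : Finset Ω) (x z : Ω) : ℕ :=
  if relp C α p {x, z} then 1 else 0
lemma image_g_inv (g : Equiv.Perm Ω) (q : Finset Ω) : (q.image g).image ⇑g⁻¹ = q := by
  rw [Finset.image_image]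
  have : (⇑g⁻¹ ∘ ⇑g) = id := funext fun x => g.symm_apply_apply x
  rw [this, Finset.image_id]

lemma image_inv_g (g : Equiv.Perm Ω) (q : Finset Ω) : (q.image ⇑g⁻¹).image ⇑g = q := by
  rw [Finset.image_image]
  have : (⇑g ∘ ⇑g⁻¹) = id := funext fun x => g.apply_symm_apply x
  rw [this, Finset.image_id]

lemma pcnt_eq (hconn : (kneser Ω k).Connected) (h1 : transOn (autC C) (nbrs C 1))
    (hdelta : ∀ α ∈ C, ∀ β ∈ C, α ≠ β → 3 ≤ (kneser Ω k).dist α β)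
    (hk1 : 1 ≤ k) {α : KVert Ω k} (hα : α ∈ C) (p : Finset Ω) {A B : Finset Ω}
    (hA : A.card = k) (hB : B.card = k) (hdA : Disjoint A α.1) (hdB : Disjoint B α.1) :
    pcnt C α p A = pcnt C α p B := by
  classical
  obtain ⟨g, hg, hAB⟩ := stab_ksets hconn h1 hdelta hk1 hα hA hB hdA hdB
  have hBA : B.image ⇑g⁻¹ = A := by rw [← hAB, image_g_inv]
  unfold pcnt
  apply Finset.card_nbij' (i := fun q => q.image g) (j := fun q => q.image ⇑g⁻¹)
  · intro q hq
    rw [Finset.mem_coe, Finset.mem_filter, Finset.mem_powersetCard] at hq ⊢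
    obtain ⟨⟨hsub, hcard2⟩, hrel⟩ := hq
    exact ⟨⟨by rw [← hAB]; exact Finset.image_subset_image hsub,
      by rw [Finset.card_image_of_injective _ g.injective, hcard2]⟩,
      relp_trans hrel ⟨g, hg, rfl⟩⟩
  · intro q hq
    rw [Finset.mem_coe, Finset.mem_filter, Finset.mem_powersetCard] at hq ⊢
    obtain ⟨⟨hsub, hcard2⟩, hrel⟩ := hq
    exact ⟨⟨by rw [← hBA]; exact Finset.image_subset_image hsub,
      by rw [Finset.card_image_of_injective _ g⁻¹.injective, hcard2]⟩,
      relp_trans hrel ⟨g⁻¹, inv_mem_stab hg, rfl⟩⟩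
  · intro q _
    exact image_g_inv g q
  · intro q _
    exact image_inv_g g q

lemma pcnt_insert {α : KVert Ω k} (p : Finset Ω) {x : Ω} {S : Finset Ω} (hxS : x ∉ S) :
    pcnt C α p (insert x S) = pcnt C α p S + cnt2 C α p x S := by
  classical
  unfold pcnt cnt2
  have hdisj : Disjoint ((S.powersetCard 2).filter (fun q => relp C α p q))
      (((S.powersetCard 1).image (insert x)).filter (fun q => relp C α p q)) := by
    rw [Finset.disjoint_left]
    intro q hq1 hq2
    rw [Finset.mem_filter, Finset.mem_powersetCard] at hq1
    rw [Finset.mem_filter, Finset.mem_image] at hq2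
    obtain ⟨⟨r, _, rfl⟩, -⟩ := hq2
    exact hxS (hq1.1.1 (Finset.mem_insert_self x r))
  rw [show (2 : ℕ) = Nat.succ 1 from rfl, Finset.powersetCard_succ_insert hxS 1,
    Finset.filter_union, Finset.card_union_of_disjoint hdisj]
  congr 1
  symm
  apply Finset.card_nbij (i := fun z => ({x, z} : Finset Ω))
  · intro z hz
    rw [Finset.mem_coe, Finset.mem_filter] at hz ⊢
    refine ⟨Finset.mem_image.mpr ⟨{z}, ?_, rfl⟩, hz.2⟩
    rw [Finset.mem_powersetCard]
    exact ⟨Finset.singleton_subset_iff.mpr hz.1, Finset.card_singleton z⟩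
  · intro z1 h1 z2 h2 he
    rw [Finset.mem_coe, Finset.mem_filter] at h1 h2
    have he' : ({x, z1} : Finset Ω) = {x, z2} := he
    have hz1 : z1 ∈ ({x, z2} : Finset Ω) := he' ▸ (by simp : z1 ∈ ({x, z1} : Finset Ω))
    rcases Finset.mem_insert.mp hz1 with h | h
    · exact absurd (h ▸ h1.1) hxS
    · exact Finset.mem_singleton.mp h
  · intro q hq
    rw [Finset.mem_coe, Finset.mem_filter, Finset.mem_image] at hq
    obtain ⟨⟨r, hr, rfl⟩, hrel⟩ := hq
    rw [Finset.mem_powersetCard] at hr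
    obtain ⟨z, rfl⟩ := Finset.card_eq_one.mp hr.2
    refine ⟨z, ?_, rfl⟩
    rw [Finset.mem_coe, Finset.mem_filter]
    exact ⟨Finset.singleton_subset_iff.mp hr.1, hrel⟩

lemma cnt2_insert {α : KVert Ω k} (p : Finset Ω) (x : Ω) {z : Ω} {S : Finset Ω}
    (hzS : z ∉ S) :
    cnt2 C α p x (insert z S) = cnt2 C α p x S + aval C α p x z := by
  classical
  unfold cnt2 aval
  rw [Finset.filter_insert]
  split
  · rw [Finset.card_insert_of_notMem (fun h => hzS (Finset.mem_of_mem_filter z h))]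
  · omega

lemma cnt2_eq (hconn : (kneser Ω k).Connected) (h1 : transOn (autC C) (nbrs C 1))
    (hdelta : ∀ α ∈ C, ∀ β ∈ C, α ≠ β → 3 ≤ (kneser Ω k).dist α β)
    (hk : 2 ≤ k) {α : KVert Ω k} (hα : α ∈ C) (p : Finset Ω) {S : Finset Ω} {x y : Ω}
    (hS : ∀ s ∈ S, s ∉ α.1) (hScard : S.card = k - 1)
    (hx : x ∉ α.1) (hy : y ∉ α.1) (hxS : x ∉ S) (hyS : y ∉ S) :
    cnt2 C α p x S = cnt2 C α p y S := by
  have hAcard : (insert x S).card = k := by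
    rw [Finset.card_insert_of_notMem hxS, hScard]; omega
  have hBcard : (insert y S).card = k := by
    rw [Finset.card_insert_of_notMem hyS, hScard]; omega
  have hdA : Disjoint (insert x S) α.1 := Finset.disjoint_left.mpr (by
    intro t ht
    rcases Finset.mem_insert.mp ht with h | h
    · exact h ▸ hx
    · exact hS t h)
  have hdB : Disjoint (insert y S) α.1 := Finset.disjoint_left.mpr (by
    intro t ht
    rcases Finset.mem_insert.mp ht with h | h
    · exact h ▸ hy
    · exact hS t h)
  have hpc := pcnt_eq hconn h1 hdelta (by omega) hα p hAcard hBcard hdA hdB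
  rw [pcnt_insert p hxS, pcnt_insert p hyS] at hpc
  omega

lemma quad (hcard : Fintype.card Ω = n) (hk : 2 ≤ k) (hn : 2 * k + 2 ≤ n)
    (hconn : (kneser Ω k).Connected) (h1 : transOn (autC C) (nbrs C 1))
    (hdelta : ∀ α ∈ C, ∀ β ∈ C, α ≠ β → 3 ≤ (kneser Ω k).dist α β)
    {α : KVert Ω k} (hα : α ∈ C) (p : Finset Ω) {x y z w : Ω}
    (hx : x ∉ α.1) (hy : y ∉ α.1) (hz : z ∉ α.1) (hw : w ∉ α.1)
    (hxz : x ≠ z) (hxw : x ≠ w) (hyz : y ≠ z) (hyw : y ≠ w) (hzw : z ≠ w) :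
    aval C α p x z + aval C α p y w = aval C α p y z + aval C α p x w := by
  classical
  have hbound : k - 2 ≤ (α.1ᶜ \ {x, y, z, w}).card := by
    have hc1 : (α.1ᶜ : Finset Ω).card = n - k := by
      rw [Finset.card_compl, α.2, hcard]
    have hc2 : (α.1ᶜ : Finset Ω).card ≤ (α.1ᶜ \ {x, y, z, w}).card
        + ({x, y, z, w} : Finset Ω).card := by
      have h3 := Finset.card_sdiff_add_card (α.1ᶜ : Finset Ω) {x, y, z, w}
      have h4 : (α.1ᶜ : Finset Ω).card ≤ ((α.1ᶜ : Finset Ω) ∪ {x, y, z, w}).card :=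
        Finset.card_le_card Finset.subset_union_left
      omega
    have hc3 : ({x, y, z, w} : Finset Ω).card ≤ 4 := by
      apply le_trans (Finset.card_insert_le _ _)
      have := Finset.card_insert_le y ({z, w} : Finset Ω)
      have := Finset.card_insert_le z ({w} : Finset Ω)
      simp only [Finset.card_singleton] at *
      omega
    omega
  obtain ⟨S0, hS0sub, hS0card⟩ := Finset.exists_subset_card_eq hbound
  have hS0X : ∀ s ∈ S0, s ∉ α.1 := fun s hs =>
    Finset.mem_compl.mp (Finset.mem_sdiff.mp (hS0sub hs)).1
  have hnm : ∀ s ∈ S0, s ≠ x ∧ s ≠ y ∧ s ≠ z ∧ s ≠ w := by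
    intro s hs
    have := (Finset.mem_sdiff.mp (hS0sub hs)).2
    simp only [Finset.mem_insert, Finset.mem_singleton] at this
    tauto
  have hxS0 : x ∉ S0 := fun h => (hnm x h).1 rfl
  have hyS0 : y ∉ S0 := fun h => (hnm y h).2.1 rfl
  have hzS0 : z ∉ S0 := fun h => (hnm z h).2.2.1 rfl
  have hwS0 : w ∉ S0 := fun h => (hnm w h).2.2.2 rfl
  have hSz : ∀ s ∈ insert z S0, s ∉ α.1 := by
    intro s hs
    rcases Finset.mem_insert.mp hs with h | h
    · exact h ▸ hz
    · exact hS0X s h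
  have hSw : ∀ s ∈ insert w S0, s ∉ α.1 := by
    intro s hs
    rcases Finset.mem_insert.mp hs with h | h
    · exact h ▸ hw
    · exact hS0X s h
  have hSzcard : (insert z S0).card = k - 1 := by
    rw [Finset.card_insert_of_notMem hzS0, hS0card]; omega
  have hSwcard : (insert w S0).card = k - 1 := by
    rw [Finset.card_insert_of_notMem hwS0, hS0card]; omega
  have hxSz : x ∉ insert z S0 := by simp [hxz, hxS0]
  have hySz : y ∉ insert z S0 := by simp [hyz, hyS0]
  have hxSw : x ∉ insert w S0 := by simp [hxw, hxS0]
  have hySw : y ∉ insert w S0 := by simp [hyw, hyS0]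
  have e1 := cnt2_eq hconn h1 hdelta hk hα p hSz hSzcard hx hy hxSz hySz
  have e2 := cnt2_eq hconn h1 hdelta hk hα p hSw hSwcard hx hy hxSw hySw
  rw [cnt2_insert p x hzS0, cnt2_insert p y hzS0] at e1
  rw [cnt2_insert p x hwS0, cnt2_insert p y hwS0] at e2
  omega

lemma deg_eq (hcard : Fintype.card Ω = n) (hn : 2 * k + 2 ≤ n)
    (hconn : (kneser Ω k).Connected) (h1 : transOn (autC C) (nbrs C 1))
    (hdelta : ∀ α ∈ C, ∀ β ∈ C, α ≠ β → 3 ≤ (kneser Ω k).dist α β)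
    (hk1 : 1 ≤ k) {α : KVert Ω k} (hα : α ∈ C) (p : Finset Ω) {z w : Ω}
    (hz : z ∉ α.1) (hw : w ∉ α.1) :
    cnt2 C α p z (α.1ᶜ.erase z) = cnt2 C α p w (α.1ᶜ.erase w) := by
  classical
  obtain ⟨g, hg, hgz⟩ := stab_points hcard hn hconn h1 hdelta hk1 hα hz hw
  have hginv : g⁻¹ w = z := by rw [← hgz]; exact g.symm_apply_apply z
  unfold cnt2
  apply Finset.card_nbij' (i := ⇑g) (j := ⇑g⁻¹)
  · intro t ht
    rw [Finset.mem_coe, Finset.mem_filter, Finset.mem_erase, Finset.mem_compl] at ht ⊢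
    obtain ⟨⟨htz, htX⟩, hrel⟩ := ht
    refine ⟨⟨fun h => htz (g.injective (h.trans hgz.symm)), fun h =>
      htX ((stab_mem_iff hg.2).mp h)⟩, ?_⟩
    apply relp_trans hrel
    exact ⟨g, hg, by rw [Finset.image_insert, Finset.image_singleton, hgz]⟩
  · intro t ht
    rw [Finset.mem_coe, Finset.mem_filter, Finset.mem_erase, Finset.mem_compl] at ht ⊢
    obtain ⟨⟨htw, htX⟩, hrel⟩ := ht
    refine ⟨⟨fun h => htw (g⁻¹.injective (h.trans hginv.symm)), fun h =>
      htX ((stab_mem_iff (inv_mem_stab hg).2).mp h)⟩, ?_⟩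
    apply relp_trans hrel
    exact ⟨g⁻¹, inv_mem_stab hg, by rw [Finset.image_insert, Finset.image_singleton, hginv]⟩
  · intro t _
    exact g.symm_apply_apply t
  · intro t _
    exact g.apply_symm_apply t
lemma aval_step (hcard : Fintype.card Ω = n) (hk : 2 ≤ k) (hn : 2 * k + 2 ≤ n)
    (hconn : (kneser Ω k).Connected) (h1 : transOn (autC C) (nbrs C 1))
    (hdelta : ∀ α ∈ C, ∀ β ∈ C, α ≠ β → 3 ≤ (kneser Ω k).dist α β)
    {α : KVert Ω k} (hα : α ∈ C) (p : Finset Ω) {x z w : Ω}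
    (hx : x ∉ α.1) (hz : z ∉ α.1) (hw : w ∉ α.1)
    (hxz : x ≠ z) (hxw : x ≠ w) (hzw : z ≠ w)
    (h : relp C α p {x, z}) : relp C α p {x, w} := by
  classical
  by_contra hcon
  have hall : ∀ y, y ∉ α.1 → y ≠ z → y ≠ w → relp C α p {y, z} ∧ ¬relp C α p {y, w} := by
    intro y hy hyz hyw
    by_cases hyx : y = x
    · subst hyx; exact ⟨h, hcon⟩
    · have hq := quad hcard hk hn hconn h1 hdelta hα p hx hy hz hw hxz hxw hyz hyw hzw
      unfold aval at hq
      rw [if_pos h, if_neg hcon] at hq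
      by_cases h2' : relp C α p {y, w}
      · rw [if_pos h2'] at hq
        split_ifs at hq <;> omega
      · rw [if_neg h2'] at hq
        by_cases h1' : relp C α p {y, z}
        · exact ⟨h1', h2'⟩
        · rw [if_neg h1'] at hq; omega
  have hwXz : w ∈ α.1ᶜ.erase z := Finset.mem_erase.mpr ⟨hzw.symm, Finset.mem_compl.mpr hw⟩
  have hlow : (α.1ᶜ.erase z).erase w ⊆
      (α.1ᶜ.erase z).filter (fun t => relp C α p {z, t}) := by
    intro t ht
    obtain ⟨htw, htmem⟩ := Finset.mem_erase.mp ht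
    obtain ⟨htz, htX⟩ := Finset.mem_erase.mp htmem
    refine Finset.mem_filter.mpr ⟨htmem, ?_⟩
    have := (hall t (Finset.mem_compl.mp htX) htz htw).1
    rwa [Finset.pair_comm] at this
  have hup : (α.1ᶜ.erase w).filter (fun t => relp C α p {w, t}) ⊆ ({z} : Finset Ω) := by
    intro t ht
    obtain ⟨htmem, hrel⟩ := Finset.mem_filter.mp ht
    obtain ⟨htw, htX⟩ := Finset.mem_erase.mp htmem
    rw [Finset.mem_singleton]
    by_contra htz
    exact (hall t (Finset.mem_compl.mp htX) htz htw).2 (by rwa [Finset.pair_comm] at hrel)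
  have hdeg := deg_eq hcard hn hconn h1 hdelta (by omega) hα p hz hw
  have hXc : (α.1ᶜ : Finset Ω).card = n - k := by rw [Finset.card_compl, α.2, hcard]
  have hc1 : (n - k) - 2 ≤ cnt2 C α p z (α.1ᶜ.erase z) := by
    unfold cnt2
    have hcc : ((α.1ᶜ.erase z).erase w).card = (n - k) - 2 := by
      rw [Finset.card_erase_of_mem hwXz, Finset.card_erase_of_mem (Finset.mem_compl.mpr hz),
        hXc]
      omega
    calc (n - k) - 2 = ((α.1ᶜ.erase z).erase w).card := hcc.symm
      _ ≤ _ := Finset.card_le_card hlow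
  have hc2 : cnt2 C α p w (α.1ᶜ.erase w) ≤ 1 := by
    unfold cnt2
    calc _ ≤ ({z} : Finset Ω).card := Finset.card_le_card hup
      _ = 1 := Finset.card_singleton z
  omega

/-- The stabiliser of a codeword acts 2-homogeneously on the complement of `α`. -/
lemma stab_pairs (hcard : Fintype.card Ω = n) (hk : 2 ≤ k) (hn : 2 * k + 2 ≤ n)
    (hconn : (kneser Ω k).Connected) (h1 : transOn (autC C) (nbrs C 1))
    (hdelta : ∀ α ∈ C, ∀ β ∈ C, α ≠ β → 3 ≤ (kneser Ω k).dist α β)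
    {α : KVert Ω k} (hα : α ∈ C) {u v s t : Ω} (huv : u ≠ v) (hst : s ≠ t)
    (hu : u ∉ α.1) (hv : v ∉ α.1) (hs : s ∉ α.1) (ht : t ∉ α.1) :
    ∃ g ∈ stab C α, ({u, v} : Finset Ω).image g = {s, t} := by
  suffices hrel : relp C α {u, v} {s, t} from hrel
  have base : relp C α {u, v} {u, v} := relp_refl _
  have step : ∀ x z w : Ω, x ∉ α.1 → z ∉ α.1 → w ∉ α.1 → x ≠ z → x ≠ w → z ≠ w →
      relp C α {u, v} {x, z} → relp C α {u, v} {x, w} := fun x z w ha hb hc hd he hf hr =>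
    aval_step hcard hk hn hconn h1 hdelta hα {u, v} ha hb hc hd he hf hr
  by_cases hsu : s = u
  · by_cases htv : t = v
    · rw [hsu, htv]; exact base
    · rw [hsu]
      exact step u v t hu hv ht huv (hsu ▸ hst) (fun h => htv h.symm) base
  · by_cases hsv : s = v
    · by_cases htu : t = u
      · rw [hsv, htu, Finset.pair_comm v u]; exact base
      · rw [hsv]
        have base' : relp C α ({u, v} : Finset Ω) ({v, u} : Finset Ω) := by
          rw [Finset.pair_comm v u]; exact base
        exact step v u t hv hu ht (Ne.symm huv) (hsv ▸ hst) (fun h => htu h.symm) base'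
    · by_cases htu : t = u
      · rw [htu, Finset.pair_comm s u]
        exact step u v s hu hv hs huv (fun h => hsu h.symm) (fun h => hsv h.symm) base
      · by_cases htv : t = v
        · rw [htv, Finset.pair_comm s v]
          have base' : relp C α ({u, v} : Finset Ω) ({v, u} : Finset Ω) := by
            rw [Finset.pair_comm v u]; exact base
          exact step v u s hv hu hs (Ne.symm huv) (fun h => hsv h.symm)
            (fun h => hsu h.symm) base'
        · have r1 : relp C α ({u, v} : Finset Ω) ({u, t} : Finset Ω) :=
            step u v t hu hv ht huv (fun h => htu h.symm) (fun h => htv h.symm) base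
          have r2 : relp C α ({u, v} : Finset Ω) ({t, u} : Finset Ω) := by
            rwa [Finset.pair_comm u t] at r1
          have r3 : relp C α ({u, v} : Finset Ω) ({t, s} : Finset Ω) :=
            step t u s ht hu hs htu (Ne.symm hst) (fun h => hsu h.symm) r2
          rwa [Finset.pair_comm t s] at r3
/-- Every pair of points lies in the complement of some codeword. -/
lemma pair_avoid (hcard : Fintype.card Ω = n) (hn : 2 * k + 2 ≤ n)
    (hC : C.Nontrivial) (htransΩ : ∀ x y : Ω, ∃ g ∈ autC C, g x = y)
    {u v : Ω} (huv : u ≠ v) : ∃ α ∈ C, u ∉ α.1 ∧ v ∉ α.1 := by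
  classical
  by_contra hcon
  push_neg at hcon
  set CF : Finset (KVert Ω k) := (Set.toFinite C).toFinset with hCF
  have hmemCF : ∀ β : KVert Ω k, β ∈ CF ↔ β ∈ C := fun β => Set.Finite.mem_toFinset _
  set lam : Ω → ℕ := fun x => (CF.filter (fun β => x ∈ β.1)).card with hlam
  have lam_const : ∀ x y : Ω, lam x = lam y := by
    intro x y
    obtain ⟨g, hg, hgx⟩ := htransΩ x y
    apply Finset.card_nbij' (i := permV g) (j := permV g⁻¹)
    · intro β hβ
      rw [Finset.mem_coe, Finset.mem_filter, hmemCF] at hβ ⊢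
      refine ⟨permV_mem_C hg hβ.1, ?_⟩
      show y ∈ β.1.map g.toEmbedding
      rw [← hgx]
      exact Finset.mem_map' _ |>.mpr hβ.2
    · intro β hβ
      rw [Finset.mem_coe, Finset.mem_filter, hmemCF] at hβ ⊢
      refine ⟨permV_mem_C (inv_mem_autC hg) hβ.1, ?_⟩
      show x ∈ β.1.map g⁻¹.toEmbedding
      have hx' : g⁻¹ y = x := by rw [← hgx]; exact g.symm_apply_apply x
      rw [← hx']
      exact Finset.mem_map' _ |>.mpr hβ.2
    · intro β _; exact permV_inv_permV g β
    · intro β _; exact permV_permV_inv g β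
  have hsum : ∑ x : Ω, lam x = CF.card * k := by
    rw [hlam]
    simp only
    have h1 : ∀ x : Ω, (CF.filter (fun β => x ∈ β.1)).card
        = ∑ β ∈ CF, if x ∈ β.1 then 1 else 0 := fun x => Finset.card_filter _ _
    rw [Finset.sum_congr rfl (fun x _ => h1 x), Finset.sum_comm]
    have h2 : ∀ β : KVert Ω k, β ∈ CF → (∑ x : Ω, if x ∈ β.1 then 1 else 0) = k := by
      intro β _
      rw [Finset.sum_ite_mem, Finset.univ_inter, Finset.sum_const, smul_eq_mul, mul_one, β.2]
    rw [Finset.sum_congr rfl h2, Finset.sum_const, smul_eq_mul]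
  have hn_lam : n * lam u = CF.card * k := by
    have : ∑ x : Ω, lam x = n * lam u := by
      rw [Finset.sum_congr rfl (fun x _ => lam_const x u), Finset.sum_const, smul_eq_mul,
        Finset.card_univ, hcard]
    omega
  have hsplit : lam u + (CF.filter (fun β => u ∉ β.1)).card = CF.card := by
    rw [hlam]
    simp only
    exact Finset.card_filter_add_card_filter_not _
  have hsub : CF.filter (fun β => u ∉ β.1) ⊆ CF.filter (fun β => v ∈ β.1) := by
    intro β hβ
    rw [Finset.mem_filter] at hβ ⊢
    exact ⟨hβ.1, hcon β ((hmemCF β).mp hβ.1) hβ.2⟩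
  have hle : (CF.filter (fun β => u ∉ β.1)).card ≤ lam v := Finset.card_le_card hsub
  have hlamv : lam v = lam u := lam_const v u
  have hc1 : 1 ≤ CF.card := by
    obtain ⟨a, ha, -⟩ := hC
    exact Finset.card_pos.mpr ⟨a, (hmemCF a).mpr ha⟩
  have h2 : CF.card ≤ 2 * lam u := by omega
  have e1 : n * CF.card ≤ 2 * (CF.card * k) := by
    calc n * CF.card ≤ n * (2 * lam u) := Nat.mul_le_mul_left n h2
      _ = 2 * (n * lam u) := by ring
      _ = 2 * (CF.card * k) := by rw [hn_lam]
  have e2 : (2 * k + 2) * CF.card ≤ n * CF.card := Nat.mul_le_mul_right CF.card hn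
  have e3 : 2 * (CF.card * k) + 2 * CF.card ≤ 2 * (CF.card * k) := by
    calc 2 * (CF.card * k) + 2 * CF.card = (2 * k + 2) * CF.card := by ring
      _ ≤ n * CF.card := e2
      _ ≤ 2 * (CF.card * k) := e1
  have e4 : 2 * CF.card ≤ 0 := by
    have := Nat.le_of_add_le_add_left (a := 2 * (CF.card * k))
      (by simpa using e3 : 2 * (CF.card * k) + 2 * CF.card ≤ 2 * (CF.card * k) + 0)
    exact this
  omega

end Stmt13Aux

/-- a neighbour-transitive code with minimum distance at least 3 in a
non-odd Kneser graph, whose automorphism group is transitive on `Ω`, has `Aut(C)`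
acting 2-homogeneously on `Ω`. -/
theorem stmt13 {Ω : Type*} [Fintype Ω] [DecidableEq Ω] {n k : ℕ}
    (hcard : Fintype.card Ω = n) (hk : 2 ≤ k) (hn : 2 * k + 2 ≤ n)
    (C : Set (KVert Ω k)) (hC : C.Nontrivial)
    (h0 : transOn (autC C) C) (h1 : transOn (autC C) (nbrs C 1))
    (hdelta : ∀ α ∈ C, ∀ β ∈ C, α ≠ β → 3 ≤ (kneser Ω k).dist α β)
    (htransΩ : ∀ x y : Ω, ∃ g ∈ autC C, g x = y) :
    ∀ u v u' v' : Ω, u ≠ v → u' ≠ v' →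
      ∃ g ∈ autC C, ({u, v} : Finset Ω).map g.toEmbedding = {u', v'} := by
  classical
  intro u v u' v' huv hu'v'
  have hk1 : 1 ≤ k := by omega
  have hconn := Stmt13Aux.kneser_connected hcard hk1 hn
  obtain ⟨α, hα, hu1, hv1⟩ := Stmt13Aux.pair_avoid hcard hn hC htransΩ huv
  obtain ⟨α', hα', hu2, hv2⟩ := Stmt13Aux.pair_avoid hcard hn hC htransΩ hu'v'
  obtain ⟨g0, hg0, hg0α⟩ := h0 α' hα' α hα
  have hmap : α'.1.map g0.toEmbedding = α.1 := congrArg Subtype.val hg0α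
  have hmem : ∀ x, g0 x ∈ α.1 ↔ x ∈ α'.1 := fun x => by
    rw [← hmap]; exact Finset.mem_map' _
  have hne'' : g0 u' ≠ g0 v' := fun h => hu'v' (g0.injective h)
  obtain ⟨g1, hg1, hg1img⟩ := Stmt13Aux.stab_pairs hcard hk hn hconn h1 hdelta hα huv hne''
    hu1 hv1 (fun h => hu2 ((hmem u').mp h)) (fun h => hv2 ((hmem v').mp h))
  refine ⟨g0⁻¹ * g1, Stmt13Aux.mul_mem_autC (Stmt13Aux.inv_mem_autC hg0) hg1.1, ?_⟩
  rw [Finset.map_eq_image]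
  simp only [Equiv.coe_toEmbedding]
  rw [Equiv.Perm.coe_mul, ← Finset.image_image, hg1img]
  rw [Finset.image_insert, Finset.image_singleton]
  simp
end

section
/- Let Ω = U ∪ V (disjoint) with |U| = 5 and V = F₂³ the point set of AG(3,2), and let C be the code in O₇ = K(13,6) consisting of all 6-subsets α with |α ∩ U| = 2 and α ∩ V a tetrahedron (a 4-subset of F₂³ that is not an affine plane). Then |C| = 560, C has minimum distance 1 in O₇, and C₁ is exactly the set of 6-subsets β with |β ∩ U| = 3 and β ∩ V a 3-subset of F₂³; moreover the group S₅ × AGL₃(2) (acting naturally on U and V) is contained in Aut(C) and acts transitively on C and on C₁. -/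
open Finset

/-- Points of `AG(3,2)`. -/
abbrev AGPt := Fin 3 → ZMod 2

/-- The 13-element underlying set `Ω = U ⊔ V` with `|U| = 5` and `V = F₂³`. -/
abbrev Om17 := Fin 5 ⊕ AGPt

/-- The `U`-part of a subset of `Ω`. -/
def upart (α : Finset Om17) : Finset (Fin 5) :=
  Finset.univ.filter fun i => Sum.inl i ∈ α

/-- The `V`-part of a subset of `Ω`. -/
def vpart (α : Finset Om17) : Finset AGPt :=
  Finset.univ.filter fun x => Sum.inr x ∈ α

/-- A tetrahedron: a 4-subset of `F₂³` that is not an affine plane. -/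
def tetra (s : Finset AGPt) : Prop := s.card = 4 ∧ ∑ x ∈ s, x ≠ 0

/- ======================== auxiliary material ======================== -/

instance : DecidablePred tetra := fun s => by unfold tetra; infer_instance

lemma ag_add_self (x : AGPt) : x + x = 0 := by
  funext i
  exact (by decide : ∀ a : ZMod 2, a + a = 0) _

lemma ag_neg (x : AGPt) : -x = x := neg_eq_of_add_eq_zero_right (ag_add_self x)

lemma ag_sub (x y : AGPt) : x - y = x + y := by rw [sub_eq_add_neg, ag_neg]

lemma zmod2_cases (a : ZMod 2) : a = 0 ∨ a = 1 := by revert a; decide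

lemma ag_sum_univ : ∑ x : AGPt, x = 0 := by decide

lemma ag_card : Fintype.card AGPt = 8 := by simp

lemma om_card : Fintype.card Om17 = 13 := by simp

lemma mem_upart {s : Finset Om17} {i : Fin 5} : i ∈ upart s ↔ Sum.inl i ∈ s := by simp [upart]
lemma mem_vpart {s : Finset Om17} {x : AGPt} : x ∈ vpart s ↔ Sum.inr x ∈ s := by simp [vpart]

def pje : Fin 5 ↪ Om17 := ⟨Sum.inl, Sum.inl_injective⟩
def pke : AGPt ↪ Om17 := ⟨Sum.inr, Sum.inr_injective⟩

def glue (p : Finset (Fin 5)) (q : Finset AGPt) : Finset Om17 := p.map pje ∪ q.map pke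

lemma mem_glue_inl {p : Finset (Fin 5)} {q : Finset AGPt} {i : Fin 5} :
    Sum.inl i ∈ glue p q ↔ i ∈ p := by simp [glue, pje, pke]

lemma mem_glue_inr {p : Finset (Fin 5)} {q : Finset AGPt} {x : AGPt} :
    Sum.inr x ∈ glue p q ↔ x ∈ q := by simp [glue, pje, pke]

lemma upart_glue (p : Finset (Fin 5)) (q : Finset AGPt) : upart (glue p q) = p := by
  ext i; simp [mem_upart, mem_glue_inl]

lemma vpart_glue (p : Finset (Fin 5)) (q : Finset AGPt) : vpart (glue p q) = q := by
  ext x; simp [mem_vpart, mem_glue_inr]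

lemma card_glue (p : Finset (Fin 5)) (q : Finset AGPt) :
    (glue p q).card = p.card + q.card := by
  rw [glue, card_union_of_disjoint, card_map, card_map]
  simp [Finset.disjoint_left, pje, pke]

lemma glue_parts (s : Finset Om17) : glue (upart s) (vpart s) = s := by
  ext x
  rcases x with i | a
  · simp [mem_glue_inl, mem_upart]
  · simp [mem_glue_inr, mem_vpart]

lemma parts_card (s : Finset Om17) : (upart s).card + (vpart s).card = s.card := by
  conv_rhs => rw [← glue_parts s]
  rw [card_glue]

lemma eq_of_parts {s t : Finset Om17} (hu : upart s = upart t) (hv : vpart s = vpart t) :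
    s = t := by
  rw [← glue_parts s, hu, hv, glue_parts]

def tetF : Finset (Finset AGPt) := (Finset.univ.powersetCard 4).filter (fun s => ∑ x ∈ s, x ≠ 0)

lemma mem_tetF {s : Finset AGPt} : s ∈ tetF ↔ tetra s := by
  simp [tetF, tetra, Finset.mem_powersetCard_univ]

lemma card_tetF : tetF.card = 56 := by decide

lemma tetra_compl {s : Finset AGPt} (hs : tetra s) : tetra sᶜ := by
  constructor
  · rw [Finset.card_compl, ag_card, hs.1]
  · have h := Finset.sum_compl_add_sum s id
    simp only [id] at h
    rw [ag_sum_univ] at h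
    intro h0
    rw [h0, zero_add] at h
    exact hs.2 h

lemma exists_tetra_disjoint (t : Finset AGPt) (ht : t.card = 3) :
    ∃ s, tetra s ∧ Disjoint s t := by
  set c := tᶜ with hc
  have hcc : c.card = 5 := by rw [hc, Finset.card_compl, ag_card, ht]
  set S := ∑ x ∈ c, x with hS
  have hne : (c \ {S}).Nonempty := by
    rw [← Finset.card_pos]
    have h2 : c.card - ({S} : Finset AGPt).card ≤ (c \ {S}).card := Finset.le_card_sdiff _ _
    simp only [Finset.card_singleton, hcc] at h2
    omega
  obtain ⟨x, hx⟩ := hne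
  have hxc : x ∈ c := (Finset.mem_sdiff.mp hx).1
  have hxS : x ≠ S := by
    have := (Finset.mem_sdiff.mp hx).2
    simpa using this
  refine ⟨c.erase x, ⟨?_, ?_⟩, ?_⟩
  · rw [Finset.card_erase_of_mem hxc, hcc]
  · rw [Finset.sum_erase_eq_sub hxc]
    intro h0
    apply hxS
    have hsx : S - x = 0 := by
      have : (∑ y ∈ c, y) - x = 0 := by simpa using h0
      rw [← hS] at this
      exact this
    exact (sub_eq_zero.mp hsx).symm
  · have hsub : c.erase x ⊆ c := Finset.erase_subset _ _
    rw [hc] at hsub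
    exact disjoint_compl_left.mono_left hsub

/- ------- connectivity of K(13,6) ------- -/

lemma kneser_reach_aux : ∀ n (a b : KVert Om17 6), (a.1 \ b.1).card = n →
    (kneser Om17 6).Reachable a b := by
  intro n
  induction n using Nat.strong_induction_on with
  | _ n ih =>
    intro a b h
    rcases Nat.eq_zero_or_pos n with h0 | hpos
    · subst h0
      have hsub : a.1 ⊆ b.1 := by
        rw [← Finset.sdiff_eq_empty_iff_subset]
        exact Finset.card_eq_zero.mp h
      have : a.1 = b.1 := Finset.eq_of_subset_of_card_le hsub (by rw [a.2, b.2])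
      have : a = b := Subtype.ext this
      rw [this]
    · have hne : (a.1 \ b.1).Nonempty := Finset.card_pos.mp (h ▸ hpos)
      obtain ⟨x, hx⟩ := hne
      have hcards : (b.1 \ a.1).card = n := by
        rw [Finset.card_sdiff_comm (by rw [a.2, b.2])]; exact h
      have hne' : (b.1 \ a.1).Nonempty := Finset.card_pos.mp (hcards ▸ hpos)
      obtain ⟨y, hy⟩ := hne'
      have hxa : x ∈ a.1 := (Finset.mem_sdiff.mp hx).1
      have hyb : y ∈ b.1 := (Finset.mem_sdiff.mp hy).1
      have hya : y ∉ a.1 := (Finset.mem_sdiff.mp hy).2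
      have hya' : y ∉ a.1.erase x := fun hc => hya (Finset.mem_of_mem_erase hc)
      set a' : KVert Om17 6 := ⟨insert y (a.1.erase x), by
        rw [Finset.card_insert_of_notMem hya', Finset.card_erase_of_mem hxa, a.2]⟩ with ha'
      have hunion : a.1 ∪ a'.1 = insert y a.1 := by
        ext z
        simp only [ha', Finset.mem_union, Finset.mem_insert, Finset.mem_erase]
        constructor
        · rintro (hz | hz | ⟨_, hz⟩) <;> tauto
        · rintro (rfl | hz)
          · tauto
          · by_cases hzx : z = x
            · subst hzx; tauto
            · tauto
      have hucard : (a.1 ∪ a'.1).card = 7 := by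
        rw [hunion, Finset.card_insert_of_notMem hya, a.2]
      set c : KVert Om17 6 := ⟨(a.1 ∪ a'.1)ᶜ, by
        rw [Finset.card_compl, hucard, om_card]⟩ with hc
      have hac : (kneser Om17 6).Adj a c := by
        constructor
        · intro hcontr
          have : x ∈ c.1 := hcontr ▸ hxa
          rw [hc] at this
          simp only [Finset.mem_compl, Finset.mem_union] at this
          exact this (Or.inl hxa)
        · rw [hc]
          exact disjoint_compl_right.mono_left Finset.subset_union_left
      have hca' : (kneser Om17 6).Adj c a' := by
        constructor
        · intro hcontr
          have hy' : y ∈ a'.1 := Finset.mem_insert_self _ _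
          have : y ∈ c.1 := hcontr ▸ hy'
          rw [hc] at this
          simp only [Finset.mem_compl, Finset.mem_union] at this
          exact this (Or.inr hy')
        · rw [hc]
          exact (disjoint_compl_right.mono_left Finset.subset_union_right).symm
      have hstep : (kneser Om17 6).Reachable a a' :=
        (hac.reachable).trans hca'.reachable
      have hdec : (a'.1 \ b.1).card = n - 1 := by
        have : a'.1 \ b.1 = (a.1 \ b.1).erase x := by
          rw [ha']
          simp only
          rw [Finset.insert_sdiff_of_mem _ hyb, Finset.erase_sdiff_comm]
        rw [this, Finset.card_erase_of_mem hx, h]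
      exact hstep.trans (ih (n-1) (by omega) a' b hdec)

lemma kneser_reach (a b : KVert Om17 6) : (kneser Om17 6).Reachable a b :=
  kneser_reach_aux _ a b rfl

/- ------- affine transitivity ------- -/

lemma li_of_frame (a0 a1 a2 a3 : AGPt)
    (h01 : a0 ≠ a1) (h02 : a0 ≠ a2) (h03 : a0 ≠ a3)
    (h12 : a1 ≠ a2) (h13 : a1 ≠ a3) (h23 : a2 ≠ a3)
    (hsum : a0 + a1 + a2 + a3 ≠ 0) :
    LinearIndependent (ZMod 2) ![a1 - a0, a2 - a0, a3 - a0] := by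
  rw [Fintype.linearIndependent_iff]
  intro g hg
  rw [Fin.sum_univ_three] at hg
  simp only [Matrix.cons_val_zero, Matrix.cons_val_one, Matrix.head_cons] at hg
  rcases zmod2_cases (g 0) with h0 | h0 <;>
  rcases zmod2_cases (g 1) with h1 | h1 <;>
  rcases zmod2_cases (g 2) with h2 | h2 <;>
    rw [h0, h1, h2] at hg <;>
    simp only [zero_smul, one_smul, add_zero, zero_add, Matrix.cons_val_two,
      Matrix.tail_cons, Matrix.vecHead, Matrix.cons_val_zero] at hg
  · intro i; fin_cases i <;> assumption
  · exact absurd (by linear_combination -hg : a0 = a3) h03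
  · exact absurd (by linear_combination -hg : a0 = a2) h02
  · exact absurd (by linear_combination hg - ag_add_self a3 + ag_add_self a0 : a2 = a3) h23
  · exact absurd (by linear_combination -hg : a0 = a1) h01
  · exact absurd (by linear_combination hg - ag_add_self a3 + ag_add_self a0 : a1 = a3) h13
  · exact absurd (by linear_combination hg - ag_add_self a2 + ag_add_self a0 : a1 = a2) h12
  · exact absurd (by linear_combination hg + 2 * ag_add_self a0 : a0 + a1 + a2 + a3 = 0) hsum

noncomputable def frameBasis (a0 a1 a2 a3 : AGPt)
    (h01 : a0 ≠ a1) (h02 : a0 ≠ a2) (h03 : a0 ≠ a3)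
    (h12 : a1 ≠ a2) (h13 : a1 ≠ a3) (h23 : a2 ≠ a3)
    (hsum : a0 + a1 + a2 + a3 ≠ 0) : Module.Basis (Fin 3) (ZMod 2) AGPt :=
  basisOfLinearIndependentOfCardEqFinrank
    (li_of_frame a0 a1 a2 a3 h01 h02 h03 h12 h13 h23 hsum)
    (by simp [Module.finrank_fin_fun])

lemma frame_equiv (a0 a1 a2 a3 b0 b1 b2 b3 : AGPt)
    (h01 : a0 ≠ a1) (h02 : a0 ≠ a2) (h03 : a0 ≠ a3)
    (h12 : a1 ≠ a2) (h13 : a1 ≠ a3) (h23 : a2 ≠ a3)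
    (hsum : a0 + a1 + a2 + a3 ≠ 0)
    (k01 : b0 ≠ b1) (k02 : b0 ≠ b2) (k03 : b0 ≠ b3)
    (k12 : b1 ≠ b2) (k13 : b1 ≠ b3) (k23 : b2 ≠ b3)
    (ksum : b0 + b1 + b2 + b3 ≠ 0) :
    ∃ A : AGPt ≃ᵃ[ZMod 2] AGPt, A a0 = b0 ∧ A a1 = b1 ∧ A a2 = b2 ∧ A a3 = b3 := by
  set ba := frameBasis a0 a1 a2 a3 h01 h02 h03 h12 h13 h23 hsum with hba
  set bb := frameBasis b0 b1 b2 b3 k01 k02 k03 k12 k13 k23 ksum with hbb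
  have hbaa : ∀ i, ba i = ![a1 - a0, a2 - a0, a3 - a0] i := fun i => by
    rw [hba, frameBasis, coe_basisOfLinearIndependentOfCardEqFinrank]
  have hbbb : ∀ i, bb i = ![b1 - b0, b2 - b0, b3 - b0] i := fun i => by
    rw [hbb, frameBasis, coe_basisOfLinearIndependentOfCardEqFinrank]
  set L := ba.equiv bb (Equiv.refl _) with hL
  have hLv : ∀ i, L (ba i) = bb i := fun i => by rw [hL, Module.Basis.equiv_apply]; rfl
  set A : AGPt ≃ᵃ[ZMod 2] AGPt :=
    ((AffineEquiv.constVAdd (ZMod 2) AGPt a0).symm.trans L.toAffineEquiv).trans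
      (AffineEquiv.constVAdd (ZMod 2) AGPt b0) with hA
  have hAx : ∀ x, A x = b0 + L (x - a0) := by
    intro x
    simp [hA, AffineEquiv.trans_apply, AffineEquiv.constVAdd_symm,
      AffineEquiv.constVAdd_apply, LinearEquiv.toAffineEquiv]
    try rw [sub_eq_add_neg, add_comm, ag_neg]
  refine ⟨A, ?_, ?_, ?_, ?_⟩
  · rw [hAx, sub_self, map_zero, add_zero]
  · rw [hAx]
    have := hLv 0
    rw [hbaa 0, hbbb 0] at this
    simp only [Matrix.cons_val_zero] at this
    rw [this, add_sub_cancel]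
  · rw [hAx]
    have := hLv 1
    rw [hbaa 1, hbbb 1] at this
    simp only [Matrix.cons_val_one, Matrix.head_cons, Matrix.cons_val_zero] at this
    rw [this, add_sub_cancel]
  · rw [hAx]
    have := hLv 2
    rw [hbaa 2, hbbb 2] at this
    simp only [Matrix.cons_val_two, Matrix.tail_cons, Matrix.head_cons] at this
    rw [this, add_sub_cancel]

lemma card_eq_four {s : Finset AGPt} (h : s.card = 4) :
    ∃ a b c d : AGPt, a ≠ b ∧ a ≠ c ∧ a ≠ d ∧ b ≠ c ∧ b ≠ d ∧ c ≠ d ∧ s = {a, b, c, d} := by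
  obtain ⟨a, ha⟩ : s.Nonempty := Finset.card_pos.mp (by omega)
  have h3 : (s.erase a).card = 3 := by rw [Finset.card_erase_of_mem ha, h]
  obtain ⟨b, c, d, hbc, hbd, hcd, habc⟩ := Finset.card_eq_three.mp h3
  have hab : a ≠ b := fun hc => by
    subst hc
    exact (Finset.notMem_erase a s) (habc ▸ Finset.mem_insert_self _ _)
  have hac : a ≠ c := fun hcc => by
    subst hcc
    exact (Finset.notMem_erase a s) (habc ▸ by simp)
  have had : a ≠ d := fun hcc => by
    subst hcc
    exact (Finset.notMem_erase a s) (habc ▸ by simp)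
  refine ⟨a, b, c, d, hab, hac, had, hbc, hbd, hcd, ?_⟩
  rw [← Finset.insert_erase ha, habc]

lemma tetra_sum_eq {a b c d : AGPt} (hab : a ≠ b) (hac : a ≠ c) (had : a ≠ d)
    (hbc : b ≠ c) (hbd : b ≠ d) (hcd : c ≠ d) :
    ∑ x ∈ ({a, b, c, d} : Finset AGPt), x = a + b + c + d := by
  rw [Finset.sum_insert (by simp [hab, hac, had]),
    Finset.sum_insert (by simp [hbc, hbd]),
    Finset.sum_insert (by simp [hcd]), Finset.sum_singleton]
  ring

lemma tetra_trans {s t : Finset AGPt} (hs : tetra s) (ht : tetra t) :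
    ∃ A : AGPt ≃ᵃ[ZMod 2] AGPt, s.image A = t := by
  obtain ⟨a0, a1, a2, a3, h01, h02, h03, h12, h13, h23, hseq⟩ := card_eq_four hs.1
  obtain ⟨b0, b1, b2, b3, k01, k02, k03, k12, k13, k23, hteq⟩ := card_eq_four ht.1
  have hsum : a0 + a1 + a2 + a3 ≠ 0 := by
    rw [← tetra_sum_eq h01 h02 h03 h12 h13 h23, ← hseq]; exact hs.2
  have ksum : b0 + b1 + b2 + b3 ≠ 0 := by
    rw [← tetra_sum_eq k01 k02 k03 k12 k13 k23, ← hteq]; exact ht.2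
  obtain ⟨A, hA0, hA1, hA2, hA3⟩ :=
    frame_equiv a0 a1 a2 a3 b0 b1 b2 b3 h01 h02 h03 h12 h13 h23 hsum
      k01 k02 k03 k12 k13 k23 ksum
  refine ⟨A, ?_⟩
  rw [hseq, hteq]
  simp [Finset.image_insert, hA0, hA1, hA2, hA3]

lemma triangle_trans {s t : Finset AGPt} (hs : s.card = 3) (ht : t.card = 3) :
    ∃ A : AGPt ≃ᵃ[ZMod 2] AGPt, s.image A = t := by
  obtain ⟨a0, a1, a2, h01, h02, h12, hseq⟩ := Finset.card_eq_three.mp hs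
  obtain ⟨b0, b1, b2, k01, k02, k12, hteq⟩ := Finset.card_eq_three.mp ht
  -- extend to frames
  have hext : ∀ x0 x1 x2 : AGPt, x0 ≠ x1 → x0 ≠ x2 → x1 ≠ x2 →
      ∃ x3, x0 ≠ x3 ∧ x1 ≠ x3 ∧ x2 ≠ x3 ∧ x0 + x1 + x2 + x3 ≠ 0 := by
    intro x0 x1 x2 _ _ _
    have : (({x0, x1, x2, x0 + x1 + x2} : Finset AGPt)ᶜ).Nonempty := by
      rw [← Finset.card_pos, Finset.card_compl, ag_card]
      have h4 : ({x0, x1, x2, x0 + x1 + x2} : Finset AGPt).card ≤ 4 := by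
        refine le_trans (Finset.card_insert_le _ _) ?_
        refine le_trans (Nat.add_le_add_right (Finset.card_insert_le _ _) 1) ?_
        refine le_trans (Nat.add_le_add_right (Nat.add_le_add_right
          (Finset.card_insert_le _ _) 1) 1) ?_
        simp
      omega
    obtain ⟨x3, hx3⟩ := this
    simp only [Finset.mem_compl, Finset.mem_insert, Finset.mem_singleton, not_or] at hx3
    obtain ⟨n0, n1, n2, n3⟩ := hx3
    refine ⟨x3, fun h => n0 h.symm, fun h => n1 h.symm, fun h => n2 h.symm, fun h => ?_⟩
    apply n3
    linear_combination h - ag_add_self x0 - ag_add_self x1 - ag_add_self x2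
  obtain ⟨a3, h03, h13, h23, hsum⟩ := hext a0 a1 a2 h01 h02 h12
  obtain ⟨b3, k03, k13, k23, ksum⟩ := hext b0 b1 b2 k01 k02 k12
  obtain ⟨A, hA0, hA1, hA2, _⟩ :=
    frame_equiv a0 a1 a2 a3 b0 b1 b2 b3 h01 h02 h03 h12 h13 h23 hsum
      k01 k02 k03 k12 k13 k23 ksum
  refine ⟨A, ?_⟩
  rw [hseq, hteq]
  simp [Finset.image_insert, hA0, hA1, hA2]

/- ------- permutations of Fin 5 moving any k-set to any k-set ------- -/

lemma perm_map_finset {α : Type*} [DecidableEq α] [Fintype α] (s t : Finset α)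
    (h : s.card = t.card) : ∃ σ : Equiv.Perm α, s.image σ = t := by
  have hc : sᶜ.card = tᶜ.card := by rw [Finset.card_compl, Finset.card_compl, h]
  let es : (s : Set α) ≃ (t : Set α) := Finset.equivOfCardEq h
  let ec : (sᶜ : Finset α) ≃ (tᶜ : Finset α) := Finset.equivOfCardEq hc
  let e1 : {x // x ∈ s} ⊕ {x // x ∉ s} ≃ α := Equiv.sumCompl _
  let e2 : {x // x ∈ t} ⊕ {x // x ∉ t} ≃ α := Equiv.sumCompl _
  let ec' : {x // x ∉ s} ≃ {x // x ∉ t} :=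
    (Equiv.subtypeEquivRight (fun x => by simp)).trans
      (ec.trans (Equiv.subtypeEquivRight (fun x => by simp)))
  let σ : Equiv.Perm α := e1.symm.trans ((Equiv.sumCongr es ec').trans e2)
  refine ⟨σ, ?_⟩
  apply Finset.eq_of_subset_of_card_le
  · intro y hy
    simp only [Finset.mem_image] at hy
    obtain ⟨x, hx, hxy⟩ := hy
    have : σ x = (es ⟨x, hx⟩ : α) := by
      simp only [σ, Equiv.trans_apply, e1]
      rw [Equiv.sumCompl_symm_apply_of_pos hx]
      rfl
    rw [← hxy, this]
    exact (es ⟨x, hx⟩).2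
  · rw [Finset.card_image_of_injective _ σ.injective, h]

/- ------- behaviour of parts under permV ------- -/

lemma upart_map (g : Equiv.Perm Om17) (σ : Equiv.Perm (Fin 5)) (A : AGPt ≃ᵃ[ZMod 2] AGPt)
    (hu : ∀ i, g (Sum.inl i) = Sum.inl (σ i)) (hv : ∀ x, g (Sum.inr x) = Sum.inr (A x))
    (s : Finset Om17) : upart (s.map g.toEmbedding) = (upart s).image σ := by
  ext i
  simp only [mem_upart, Finset.mem_map, Finset.mem_image]
  constructor
  · rintro ⟨z, hz, hgz⟩
    rw [Equiv.coe_toEmbedding] at hgz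
    rcases z with j | x
    · rw [hu j] at hgz
      exact ⟨j, hz, Sum.inl_injective hgz⟩
    · rw [hv x] at hgz
      exact absurd hgz (by simp)
  · rintro ⟨j, hj, hji⟩
    exact ⟨Sum.inl j, hj, by rw [Equiv.coe_toEmbedding, hu j, hji]⟩

lemma vpart_map (g : Equiv.Perm Om17) (σ : Equiv.Perm (Fin 5)) (A : AGPt ≃ᵃ[ZMod 2] AGPt)
    (hu : ∀ i, g (Sum.inl i) = Sum.inl (σ i)) (hv : ∀ x, g (Sum.inr x) = Sum.inr (A x))
    (s : Finset Om17) : vpart (s.map g.toEmbedding) = (vpart s).image A := by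
  ext x
  simp only [mem_vpart, Finset.mem_map, Finset.mem_image]
  constructor
  · rintro ⟨z, hz, hgz⟩
    rw [Equiv.coe_toEmbedding] at hgz
    rcases z with j | y
    · rw [hu j] at hgz
      exact absurd hgz (by simp)
    · rw [hv y] at hgz
      exact ⟨y, hz, Sum.inr_injective hgz⟩
  · rintro ⟨y, hy, hyx⟩
    exact ⟨Sum.inr y, hy, by rw [Equiv.coe_toEmbedding, hv y, hyx]⟩

lemma ag_four_smul (z : AGPt) : (4 : ℕ) • z = 0 := by
  have : (4 : ℕ) • z = z + z + (z + z) := by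
    rw [show (4 : ℕ) = 2 + 2 from rfl, add_nsmul, two_nsmul]
  rw [this]
  simp [ag_add_self]

lemma tetra_image (A : AGPt ≃ᵃ[ZMod 2] AGPt) {s : Finset AGPt} (hs : tetra s) :
    tetra (s.image A) := by
  have hinj : Function.Injective A := A.toEquiv.injective
  constructor
  · rw [Finset.card_image_of_injective _ hinj, hs.1]
  · rw [Finset.sum_image (fun x _ y _ h => hinj h)]
    have hAv : ∀ x : AGPt, A x = A.linear x + A 0 := by
      intro x
      have := A.toAffineMap.map_vadd 0 x
      simpa [vadd_eq_add] using this
    rw [Finset.sum_congr rfl (fun x _ => hAv x), Finset.sum_add_distrib,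
      Finset.sum_const, hs.1, ← map_sum]
    rw [ag_four_smul, add_zero]
    intro h0
    have := A.linear.injective (by rw [h0, map_zero] : A.linear (∑ x ∈ s, x) = A.linear 0)
    exact hs.2 this

/- ------- counting ------- -/

lemma count560 :
    ({α : KVert Om17 6 | (upart α.1).card = 2 ∧ tetra (vpart α.1)} : Set (KVert Om17 6)).ncard
      = 560 := by
  classical
  have hset : {α : KVert Om17 6 | (upart α.1).card = 2 ∧ tetra (vpart α.1)} =
      ↑(Finset.univ.filter
        (fun α : KVert Om17 6 => (upart α.1).card = 2 ∧ tetra (vpart α.1))) := by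
    ext α; simp
  rw [hset, Set.ncard_coe_finset]
  have hb : (Finset.univ.filter
        (fun α : KVert Om17 6 => (upart α.1).card = 2 ∧ tetra (vpart α.1))).card
      = ((Finset.univ.powersetCard 2 : Finset (Finset (Fin 5))) ×ˢ tetF).card := by
    refine Finset.card_bij' (fun α _ => (upart α.1, vpart α.1))
      (fun p hp => ⟨glue p.1 p.2, by
        have hp' := Finset.mem_product.mp hp
        have h1 : p.1.card = 2 := Finset.mem_powersetCard_univ.mp hp'.1
        have h2 : p.2.card = 4 := (mem_tetF.mp hp'.2).1
        rw [card_glue, h1, h2]⟩)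
      ?_ ?_ ?_ ?_
    · intro α hα
      simp only [Finset.mem_filter] at hα
      rw [Finset.mem_product]
      exact ⟨Finset.mem_powersetCard_univ.mpr hα.2.1, mem_tetF.mpr hα.2.2⟩
    · intro p hp
      simp only [Finset.mem_filter, Finset.mem_univ, true_and]
      rw [Finset.mem_product] at hp
      rw [upart_glue, vpart_glue]
      exact ⟨Finset.mem_powersetCard_univ.mp hp.1, mem_tetF.mp hp.2⟩
    · intro α hα
      exact Subtype.ext (glue_parts α.1)
    · intro p hp
      simp [upart_glue, vpart_glue]
  rw [hb, Finset.card_product, Finset.card_powersetCard, card_tetF, Finset.card_univ]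
  simp only [Fintype.card_fin]
  norm_num [Nat.choose]

/- ------- explicit adjacent codewords ------- -/

def cw0 : Finset Om17 :=
  {Sum.inl 0, Sum.inl 1, Sum.inr ![0,0,0], Sum.inr ![0,0,1], Sum.inr ![0,1,0], Sum.inr ![1,0,0]}
def cw1 : Finset Om17 :=
  {Sum.inl 2, Sum.inl 3, Sum.inr ![0,1,1], Sum.inr ![1,0,1], Sum.inr ![1,1,0], Sum.inr ![1,1,1]}

lemma cw0_card : cw0.card = 6 := by decide
lemma cw1_card : cw1.card = 6 := by decide
lemma up0 : upart cw0 = {0, 1} := by ext i; simp [upart, cw0]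
lemma vp0 : vpart cw0 = {![0,0,0], ![0,0,1], ![0,1,0], ![1,0,0]} := by
  ext x; simp [vpart, cw0]
lemma up1 : upart cw1 = {2, 3} := by ext i; simp [upart, cw1]
lemma vp1 : vpart cw1 = {![0,1,1], ![1,0,1], ![1,1,0], ![1,1,1]} := by
  ext x; simp [vpart, cw1]
lemma cw0_mem : (upart cw0).card = 2 ∧ tetra (vpart cw0) :=
  ⟨by rw [up0]; decide, by rw [vp0]; exact ⟨by decide, by decide⟩⟩
lemma cw1_mem : (upart cw1).card = 2 ∧ tetra (vpart cw1) :=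
  ⟨by rw [up1]; decide, by rw [vp1]; exact ⟨by decide, by decide⟩⟩
lemma cw_disj : cw0 ∩ cw1 = ∅ := by decide
lemma cw_ne : cw0 ≠ cw1 := by decide

/- ------- permV helper ------- -/

lemma permV_inv (g : Equiv.Perm Om17) (a : KVert Om17 6) : permV g (permV g⁻¹ a) = a := by
  apply Subtype.ext
  show (a.1.map _).map _ = a.1
  rw [Finset.map_map]
  ext z
  simp [Finset.mem_map, Function.Embedding.trans_apply, Equiv.coe_toEmbedding]

lemma permV_mem_C (g : Equiv.Perm Om17) (σ : Equiv.Perm (Fin 5)) (A : AGPt ≃ᵃ[ZMod 2] AGPt)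
    (hu : ∀ i, g (Sum.inl i) = Sum.inl (σ i)) (hv : ∀ x, g (Sum.inr x) = Sum.inr (A x))
    {α : KVert Om17 6} (hα : (upart α.1).card = 2 ∧ tetra (vpart α.1)) :
    (upart (permV g α).1).card = 2 ∧ tetra (vpart (permV g α).1) := by
  have h1 : (permV g α).1 = α.1.map g.toEmbedding := rfl
  rw [h1, upart_map g σ A hu hv, vpart_map g σ A hu hv]
  exact ⟨by rw [Finset.card_image_of_injective _ σ.injective]; exact hα.1,
    tetra_image A hα.2⟩

lemma inv_struct (g : Equiv.Perm Om17) (σ : Equiv.Perm (Fin 5)) (A : AGPt ≃ᵃ[ZMod 2] AGPt)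
    (hu : ∀ i, g (Sum.inl i) = Sum.inl (σ i)) (hv : ∀ x, g (Sum.inr x) = Sum.inr (A x)) :
    (∀ i, g⁻¹ (Sum.inl i) = Sum.inl (σ⁻¹ i)) ∧
    (∀ x, g⁻¹ (Sum.inr x) = Sum.inr (A.symm x)) := by
  constructor
  · intro i
    apply g.injective
    rw [show ∀ y, g (g⁻¹ y) = y from fun y => g.apply_symm_apply y, hu]
    congr 1
    exact (σ.apply_symm_apply i).symm
  · intro x
    apply g.injective
    rw [show ∀ y, g (g⁻¹ y) = y from fun y => g.apply_symm_apply y, hv]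
    congr 1
    exact (A.apply_symm_apply x).symm

/-- the code of Example 5.1 in `O₇ = K(13,6)` has 560 codewords, minimum
distance 1, `C₁` consisting exactly of the vertices meeting `U` in 3 points and `V` in a
3-subset, and is neighbour-transitive for `S₅ × AGL₃(2)`. -/
theorem stmt17
    (C : Set (KVert Om17 6))
    (hCdef : C = {α | (upart α.1).card = 2 ∧ tetra (vpart α.1)})
    (G : Set (Equiv.Perm Om17))
    (hGdef : G = {g | ∃ σ : Equiv.Perm (Fin 5), ∃ A : AGPt ≃ᵃ[ZMod 2] AGPt,
        (∀ i, g (Sum.inl i) = Sum.inl (σ i)) ∧ ∀ x, g (Sum.inr x) = Sum.inr (A x)}) :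
    C.ncard = 560 ∧
    (∃ α ∈ C, ∃ β ∈ C, (kneser Om17 6).Adj α β) ∧
    nbrs C 1 = {β | (upart β.1).card = 3 ∧ (vpart β.1).card = 3} ∧
    G ⊆ autC C ∧ transOn G C ∧ transOn G (nbrs C 1) := by
  subst hCdef
  subst hGdef
  set C : Set (KVert Om17 6) := {α | (upart α.1).card = 2 ∧ tetra (vpart α.1)} with hC
  -- neighbours characterisation first
  have hN : nbrs C 1 = {β : KVert Om17 6 | (upart β.1).card = 3 ∧ (vpart β.1).card = 3} := by
    ext γ
    constructor
    · rintro ⟨⟨α, hαC, hdist⟩, hmin⟩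
      have hadj : (kneser Om17 6).Adj α γ := (SimpleGraph.dist_eq_one_iff_adj).mp hdist
      have hγC : γ ∉ C := by
        intro hγ
        have := hmin γ hγ
        rw [SimpleGraph.dist_self] at this
        omega
      have hdisj := hadj.2
      have husub : upart γ.1 ⊆ (upart α.1)ᶜ := by
        intro i hi
        rw [Finset.mem_compl, mem_upart]
        exact fun hc => (Finset.disjoint_left.mp hdisj) hc (mem_upart.mp hi)
      have hvsub : vpart γ.1 ⊆ (vpart α.1)ᶜ := by
        intro x hx
        rw [Finset.mem_compl, mem_vpart]
        exact fun hc => (Finset.disjoint_left.mp hdisj) hc (mem_vpart.mp hx)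
      have hub : (upart γ.1).card ≤ 3 := by
        have := Finset.card_le_card husub
        rw [Finset.card_compl, hαC.1] at this
        simpa using this
      have hvb : (vpart γ.1).card ≤ 4 := by
        have := Finset.card_le_card hvsub
        rw [Finset.card_compl, ag_card, hαC.2.1] at this
        omega
      have hsum : (upart γ.1).card + (vpart γ.1).card = 6 := by
        rw [parts_card, γ.2]
      have hu23 : (upart γ.1).card = 2 ∨ (upart γ.1).card = 3 := by omega
      rcases hu23 with hu2 | hu3
      · exfalso
        have hv4 : (vpart γ.1).card = 4 := by omega
        have : vpart γ.1 = (vpart α.1)ᶜ := by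
          apply Finset.eq_of_subset_of_card_le hvsub
          rw [Finset.card_compl, ag_card, hαC.2.1, hv4]
        exact hγC ⟨hu2, this ▸ tetra_compl hαC.2⟩
      · exact ⟨hu3, by omega⟩
    · rintro ⟨hu3, hv3⟩
      obtain ⟨s, hstet, hsdisj⟩ := exists_tetra_disjoint (vpart γ.1) hv3
      have hccard : ((upart γ.1)ᶜ : Finset (Fin 5)).card = 2 := by
        rw [Finset.card_compl, hu3]
        simp
      set α : KVert Om17 6 := ⟨glue (upart γ.1)ᶜ s, by
        rw [card_glue, hccard, hstet.1]⟩ with hα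
      have hαC : α ∈ C := by
        constructor
        · show (upart (glue _ _)).card = 2
          rw [upart_glue]; exact hccard
        · show tetra (vpart (glue _ _))
          rw [vpart_glue]; exact hstet
      have hadj : (kneser Om17 6).Adj α γ := by
        constructor
        · intro h
          have : (upart α.1).card = (upart γ.1).card := by rw [h]
          rw [hα] at this
          simp only at this
          rw [upart_glue, hccard, hu3] at this
          omega
        · rw [Finset.disjoint_left]
          intro z hz hz'
          rcases z with i | x
          · have : i ∈ (upart γ.1)ᶜ := mem_glue_inl.mp hz
            rw [Finset.mem_compl] at this
            exact this (mem_upart.mpr hz')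
          · have hx : x ∈ s := mem_glue_inr.mp hz
            exact (Finset.disjoint_left.mp hsdisj) hx (mem_vpart.mpr hz')
      refine ⟨⟨α, hαC, (SimpleGraph.dist_eq_one_iff_adj).mpr hadj⟩, ?_⟩
      intro β hβ
      have hne : β ≠ γ := by
        intro h
        have : (upart β.1).card = 3 := by rw [h]; exact hu3
        rw [hβ.1] at this
        omega
      have := (kneser_reach β γ).pos_dist_of_ne hne
      omega
  refine ⟨count560, ?_, hN, ?_, ?_, ?_⟩
  · -- minimum distance 1 : two adjacent codewords
    refine ⟨⟨cw0, cw0_card⟩, cw0_mem, ⟨cw1, cw1_card⟩, cw1_mem, ?_, ?_⟩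
    · intro h
      exact cw_ne (congrArg Subtype.val h)
    · rw [Finset.disjoint_iff_inter_eq_empty]
      exact cw_disj
  · -- G ⊆ autC C
    rintro g ⟨σ, A, hu, hv⟩
    apply Set.Subset.antisymm
    · rintro _ ⟨α, hα, rfl⟩
      exact permV_mem_C g σ A hu hv hα
    · intro β hβ
      obtain ⟨hu', hv'⟩ := inv_struct g σ A hu hv
      exact ⟨permV g⁻¹ β, permV_mem_C g⁻¹ σ⁻¹ A.symm hu' hv' hβ, permV_inv g β⟩
  · -- transitive on C
    intro x hx y hy
    obtain ⟨σ, hσ⟩ := perm_map_finset (upart x.1) (upart y.1) (by rw [hx.1, hy.1])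
    obtain ⟨A, hA⟩ := tetra_trans hx.2 hy.2
    set g : Equiv.Perm Om17 := Equiv.sumCongr σ A.toEquiv with hg
    have hu : ∀ i, g (Sum.inl i) = Sum.inl (σ i) := fun i => rfl
    have hv : ∀ x, g (Sum.inr x) = Sum.inr (A x) := fun x => rfl
    refine ⟨g, ⟨σ, A, hu, hv⟩, ?_⟩
    apply Subtype.ext
    apply eq_of_parts
    · show upart (x.1.map g.toEmbedding) = upart y.1
      rw [upart_map g σ A hu hv, hσ]
    · show vpart (x.1.map g.toEmbedding) = vpart y.1
      rw [vpart_map g σ A hu hv]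
      exact hA
  · -- transitive on nbrs C 1
    rw [hN]
    intro x hx y hy
    obtain ⟨σ, hσ⟩ := perm_map_finset (upart x.1) (upart y.1) (by rw [hx.1, hy.1])
    obtain ⟨A, hA⟩ := triangle_trans hx.2 hy.2
    set g : Equiv.Perm Om17 := Equiv.sumCongr σ A.toEquiv with hg
    have hu : ∀ i, g (Sum.inl i) = Sum.inl (σ i) := fun i => rfl
    have hv : ∀ x, g (Sum.inr x) = Sum.inr (A x) := fun x => rfl
    refine ⟨g, ⟨σ, A, hu, hv⟩, ?_⟩
    apply Subtype.ext
    apply eq_of_parts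
    · show upart (x.1.map g.toEmbedding) = upart y.1
      rw [upart_map g σ A hu hv, hσ]
    · show vpart (x.1.map g.toEmbedding) = vpart y.1
      rw [vpart_map g σ A hu hv]
      exact hA
end
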